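/- Let L > 0, μ_F ≥ 0, μ_R ≥ 0, and 0 < η < 1/L. Let F : E → ℝ be differentiable with ∇F Lipschitz continuous with constant L and such that y ↦ F(y) − (μ_F/2)‖y‖² is convex, and let R : E → ℝ be such that y ↦ R(y) − (μ_R/2)‖y‖² is convex. Set G = F + R. For x ∈ E and v ∈ E, let x⁺ be the unique minimizer over y ∈ E of (1/2)‖y − (x − η·v)‖² + η·R(y), and set h = (1/η)·(x − x⁺) and Δ = v − ∇F(x). Then for every y ∈ E: G(y) ≥ G(x⁺) + ⟨h, y − x⟩ + (η/2)‖h‖² + (μ_F/2)‖y − x‖² + (μ_R/2)‖y − x⁺‖² + ⟨Δ, x⁺ − y⟩. -/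

import Mathlib

open RealInnerProductSpace

section Helpers

set_option linter.unusedSectionVars false


variable {E : Type*} [NormedAddCommGroup E] [InnerProductSpace ℝ E] [CompleteSpace E]

lemma conv_grad_ineq (f : E → ℝ) (hconv : ConvexOn ℝ Set.univ f)
    (x g : E) (hg : HasGradientAt f g x) (y : E) :
    f x + ⟪g, y - x⟫ ≤ f y := by
  have hline : HasDerivAt (fun t : ℝ => x + t • (y - x)) (y - x) 0 := by
    simpa using ((hasDerivAt_id (0 : ℝ)).smul_const (y - x)).const_add x
  have h0 : HasFDerivAt f (InnerProductSpace.toDual ℝ E g) (x + (0:ℝ) • (y - x)) := by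
    rw [show x + (0:ℝ) • (y - x) = x by simp]; exact hg.hasFDerivAt
  have hφ : HasDerivAt (fun t : ℝ => f (x + t • (y - x))) ⟪g, y - x⟫ 0 := by
    simpa [Function.comp_def] using h0.comp_hasDerivAt 0 hline
  have hslope := hasDerivAt_iff_tendsto_slope.mp hφ
  have hslope' : Filter.Tendsto (slope (fun t : ℝ => f (x + t • (y - x))) 0)
      (nhdsWithin 0 (Set.Ioi (0:ℝ))) (nhds ⟪g, y - x⟫) :=
    hslope.mono_left (nhdsWithin_mono 0 (fun t ht => ne_of_gt (Set.mem_Ioi.mp ht)))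
  have hbound : ∀ᶠ t in nhdsWithin 0 (Set.Ioi (0:ℝ)),
      slope (fun t : ℝ => f (x + t • (y - x))) 0 t ≤ f y - f x := by
    filter_upwards [Ioo_mem_nhdsGT_of_mem (Set.mem_Ico.mpr ⟨le_refl _, zero_lt_one⟩)]
      with t ht
    obtain ⟨ht0, ht1⟩ := ht
    have hcomb := hconv.2 (Set.mem_univ x) (Set.mem_univ y)
      (by linarith : (0:ℝ) ≤ 1 - t) ht0.le (by ring)
    have hz : (1 - t) • x + t • y = x + t • (y - x) := by
      module
    rw [hz] at hcomb
    rw [slope_def_field]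
    simp only [zero_smul, add_zero, sub_zero]
    simp only [smul_eq_mul] at hcomb
    rw [div_le_iff₀ ht0]
    nlinarith
  have := le_of_tendsto hslope' hbound
  linarith

lemma strong_conv_grad_ineq (f : E → ℝ) (m : ℝ)
    (hconv : ConvexOn ℝ Set.univ (fun y => f y - m / 2 * ‖y‖ ^ 2))
    (x g : E) (hg : HasGradientAt f g x) (y : E) :
    f x + ⟪g, y - x⟫ + m / 2 * ‖y - x‖ ^ 2 ≤ f y := by
  have hsq : HasFDerivAt (fun y : E => m / 2 * ‖y‖ ^ 2)
      ((m / 2) • (2 • (innerSL ℝ x))) x :=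
    (hasStrictFDerivAt_norm_sq x).hasFDerivAt.const_smul (m / 2)
  have hg' : HasGradientAt (fun y => f y - m / 2 * ‖y‖ ^ 2) (g - m • x) x := by
    rw [hasGradientAt_iff_hasFDerivAt]
    refine (hg.hasFDerivAt.sub hsq).congr_fderiv (Eq.symm ?_)
    ext u
    simp [inner_sub_left, real_inner_smul_left]
    ring
  have := conv_grad_ineq _ hconv x _ hg' y
  have hexp : ‖y - x‖ ^ 2 = ‖y‖ ^ 2 - 2 * ⟪x, y⟫ + ‖x‖ ^ 2 := by
    rw [norm_sub_sq_real]; ring_nf; rw [real_inner_comm]; ring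
  have hix : ⟪m • x, y - x⟫ = m * ⟪x, y⟫ - m * ‖x‖ ^ 2 := by
    rw [real_inner_smul_left, inner_sub_right, real_inner_self_eq_norm_sq]; ring
  rw [inner_sub_left, hix] at this
  rw [hexp]
  linarith

lemma descent_lemma (F : E → ℝ) (F' : E → E) (hF : ∀ x, HasGradientAt F (F' x) x)
    (L : ℝ) (hL : 0 < L) (hLip : LipschitzWith (Real.toNNReal L) F')
    (a b : E) : F b ≤ F a + ⟪F' a, b - a⟫ + L / 2 * ‖b - a‖ ^ 2 := by
  set d := b - a with hd
  have hline : ∀ t : ℝ, HasDerivAt (fun t : ℝ => a + t • d) d t := fun t => by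
    simpa using ((hasDerivAt_id t).smul_const d).const_add a
  have hφ : ∀ t : ℝ, HasDerivAt (fun t : ℝ => F (a + t • d)) ⟪F' (a + t • d), d⟫ t := by
    intro t
    have := (hF (a + t • d)).hasFDerivAt.comp_hasDerivAt t (hline t)
    simpa [Function.comp_def] using this
  set ψ : ℝ → ℝ := fun t => F (a + t • d) - t * ⟪F' a, d⟫ - L / 2 * ‖d‖ ^ 2 * t ^ 2 with hψ
  have hψ' : ∀ t : ℝ, HasDerivAt ψ
      (⟪F' (a + t • d), d⟫ - ⟪F' a, d⟫ - L * ‖d‖ ^ 2 * t) t := by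
    intro t
    have h1 := ((hφ t).sub ((hasDerivAt_id t).const_mul ⟪F' a, d⟫)).sub
      (((hasDerivAt_pow 2 t)).const_mul (L / 2 * ‖d‖ ^ 2))
    have h2 := h1.congr_deriv (g' := ⟪F' (a + t • d), d⟫ - ⟪F' a, d⟫ - L * ‖d‖ ^ 2 * t) (by ring)
    refine h2.congr_of_eventuallyEq (Filter.Eventually.of_forall fun s => ?_)
    simp only [hψ, id, Pi.sub_apply]; ring
  have hderiv : ∀ t : ℝ, deriv ψ t = ⟪F' (a + t • d), d⟫ - ⟪F' a, d⟫ - L * ‖d‖ ^ 2 * t :=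
    fun t => (hψ' t).deriv
  have hanti : AntitoneOn ψ (Set.Icc 0 1) := by
    apply antitoneOn_of_deriv_nonpos (convex_Icc 0 1)
    · exact fun t _ => ((hψ' t).continuousAt).continuousWithinAt
    · exact fun t _ => ((hψ' t).differentiableAt).differentiableWithinAt
    · intro t ht
      rw [interior_Icc] at ht
      rw [hderiv]
      have hlip' : ‖F' (a + t • d) - F' a‖ ≤ L * (t * ‖d‖) := by
        have := hLip.dist_le_mul (a + t • d) a
        simp only [dist_eq_norm, Real.coe_toNNReal L hL.le] at this
        calc ‖F' (a + t • d) - F' a‖ ≤ L * ‖a + t • d - a‖ := this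
          _ = L * (t * ‖d‖) := by
              rw [add_sub_cancel_left, norm_smul, Real.norm_eq_abs,
                abs_of_nonneg ht.1.le]
      have hip : ⟪F' (a + t • d) - F' a, d⟫ ≤ ‖F' (a + t • d) - F' a‖ * ‖d‖ :=
        real_inner_le_norm _ _
      have hip2 := hip.trans (mul_le_mul_of_nonneg_right hlip' (norm_nonneg d))
      rw [inner_sub_left] at hip2
      nlinarith [norm_nonneg d]
  have h01 := hanti (Set.left_mem_Icc.mpr zero_le_one) (Set.right_mem_Icc.mpr zero_le_one)
    zero_le_one
  simp only [hψ, zero_smul, add_zero, one_smul, zero_mul, zero_pow, mul_zero, sub_zero,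
    one_pow, mul_one] at h01
  have : a + d = b := by rw [hd]; abel
  rw [this] at h01
  linarith

lemma strong_min_ineq (f : E → ℝ) (m : ℝ)
    (hconv : ConvexOn ℝ Set.univ (fun y => f y - m / 2 * ‖y‖ ^ 2))
    (xp : E) (hmin : ∀ y, f xp ≤ f y) (y : E) :
    f xp + m / 2 * ‖y - xp‖ ^ 2 ≤ f y := by
  have key : ∀ t : ℝ, t ∈ Set.Ioo (0:ℝ) 1 →
      m / 2 * (1 - t) * ‖y - xp‖ ^ 2 ≤ f y - f xp := by
    intro t ⟨ht0, ht1⟩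
    have hcomb := hconv.2 (Set.mem_univ xp) (Set.mem_univ y)
      (by linarith : (0:ℝ) ≤ 1 - t) ht0.le (by ring)
    simp only [smul_eq_mul] at hcomb
    have hid : ‖(1 - t) • xp + t • y‖ ^ 2
        = (1 - t) * ‖xp‖ ^ 2 + t * ‖y‖ ^ 2 - (1 - t) * t * ‖xp - y‖ ^ 2 := by
      rw [norm_add_sq_real, norm_sub_sq_real, norm_smul, norm_smul,
        real_inner_smul_left, real_inner_smul_right, Real.norm_eq_abs, Real.norm_eq_abs,
        abs_of_nonneg (by linarith : (0:ℝ) ≤ 1 - t), abs_of_nonneg ht0.le, mul_pow, mul_pow]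
      ring
    have hmin' := hmin ((1 - t) • xp + t • y)
    have hyx : ‖y - xp‖ ^ 2 = ‖xp - y‖ ^ 2 := by rw [← neg_sub, norm_neg]
    rw [hyx]
    rw [hid] at hcomb
    have ht' : t * (m / 2 * (1 - t) * ‖xp - y‖ ^ 2) ≤ t * (f y - f xp) := by nlinarith [hcomb, hmin']
    exact le_of_mul_le_mul_left ht' ht0
  have htend : Filter.Tendsto (fun t : ℝ => m / 2 * (1 - t) * ‖y - xp‖ ^ 2)
      (nhdsWithin 0 (Set.Ioi (0:ℝ))) (nhds (m / 2 * ‖y - xp‖ ^ 2)) := by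
    have hc : Continuous (fun t : ℝ => m / 2 * (1 - t) * ‖y - xp‖ ^ 2) := by continuity
    have := (hc.tendsto 0).mono_left (nhdsWithin_le_nhds (s := Set.Ioi (0:ℝ)))
    simpa using this
  have hev : ∀ᶠ t in nhdsWithin 0 (Set.Ioi (0:ℝ)),
      m / 2 * (1 - t) * ‖y - xp‖ ^ 2 ≤ f y - f xp := by
    filter_upwards [Ioo_mem_nhdsGT_of_mem (Set.mem_Ico.mpr ⟨le_refl _, zero_lt_one⟩)]
      with t ht using key t ht
  have := le_of_tendsto htend hev
  linarith

end Helpers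

set_option maxHeartbeats 1000000 in
/-- the three-point inequality for the proximal step, Lemma 3 of
Xiao–Zhang. With `x⁺ = prox_{ηR}(x - η v)`, `h = (1/η)(x - x⁺)`, `Δ = v - ∇F(x)`,
for every `y`:
`G y ≥ G x⁺ + ⟨h, y - x⟩ + (η/2)‖h‖² + (μ_F/2)‖y - x‖² + (μ_R/2)‖y - x⁺‖² + ⟨Δ, x⁺ - y⟩`. -/
theorem prox_three_point_inequality
    {E : Type*} [NormedAddCommGroup E] [InnerProductSpace ℝ E] [FiniteDimensional ℝ E]
    (L μF μR η : ℝ) (hL : 0 < L) (hμF : 0 ≤ μF) (hμR : 0 ≤ μR)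
    (hη : 0 < η) (hηL : η < 1 / L)
    (F : E → ℝ) (F' : E → E) (hF : ∀ x, HasGradientAt F (F' x) x)
    (hLip : LipschitzWith (Real.toNNReal L) F')
    (hFconv : ConvexOn ℝ Set.univ (fun y => F y - μF / 2 * ‖y‖ ^ 2))
    (R : E → ℝ)
    (hRconv : ConvexOn ℝ Set.univ (fun y => R y - μR / 2 * ‖y‖ ^ 2))
    (G : E → ℝ) (hG : G = fun y => F y + R y)
    (x v xp : E)
    (hxp : ∀ y : E, 1 / 2 * ‖xp - (x - η • v)‖ ^ 2 + η * R xp ≤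
      1 / 2 * ‖y - (x - η • v)‖ ^ 2 + η * R y)
    (h Δ : E) (hh : h = (1 / η) • (x - xp)) (hΔ : Δ = v - F' x) :
    ∀ y : E,
      G y ≥ G xp + ⟪h, y - x⟫ + η / 2 * ‖h‖ ^ 2 + μF / 2 * ‖y - x‖ ^ 2 +
        μR / 2 * ‖y - xp‖ ^ 2 + ⟪Δ, xp - y⟫ := by
  intro y
  -- convexity of the prox objective minus (1+ημR)/2 ‖·‖²
  have hA : ConvexOn ℝ (Set.univ : Set E)
      (fun z => η * (R z - μR / 2 * ‖z‖ ^ 2)) := by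
    refine ⟨convex_univ, ?_⟩
    intro p hp q hq s t hs ht hst
    have := mul_le_mul_of_nonneg_left (hRconv.2 hp hq hs ht hst) hη.le
    simp only [smul_eq_mul] at *
    linarith
  have hB : ConvexOn ℝ (Set.univ : Set E)
      (fun z => 1 / 2 * ‖x - η • v‖ ^ 2 - ⟪z, x - η • v⟫) := by
    refine ⟨convex_univ, ?_⟩
    intro p _ q _ s t hs ht hst
    simp only [smul_eq_mul, inner_add_left, real_inner_smul_left]
    refine le_of_eq ?_
    linear_combination (-(1:ℝ) / 2 * ‖x - η • v‖ ^ 2) * hst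
  have hΦ : ConvexOn ℝ (Set.univ : Set E)
      (fun z => (1 / 2 * ‖z - (x - η • v)‖ ^ 2 + η * R z)
        - (1 + η * μR) / 2 * ‖z‖ ^ 2) := by
    have heq : (fun z => (1 / 2 * ‖z - (x - η • v)‖ ^ 2 + η * R z)
        - (1 + η * μR) / 2 * ‖z‖ ^ 2)
        = (fun z => η * (R z - μR / 2 * ‖z‖ ^ 2))
          + (fun z => 1 / 2 * ‖x - η • v‖ ^ 2 - ⟪z, x - η • v⟫) := by
      funext z
      simp only [Pi.add_apply]
      rw [norm_sub_sq_real]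
      ring
    rw [heq]
    exact hA.add hB
  have key1 := strong_min_ineq
    (fun z => 1 / 2 * ‖z - (x - η • v)‖ ^ 2 + η * R z) (1 + η * μR) hΦ xp hxp y
  have key2 := strong_conv_grad_ineq F μF hFconv x (F' x) (hF x) y
  have key3 := descent_lemma F F' hF L hL hLip x xp
  -- scalar expansions
  have eyu : ‖y - (x - η • v)‖ ^ 2
      = ‖y - x‖ ^ 2 + 2 * (η * ⟪y - x, v⟫) + η ^ 2 * ‖v‖ ^ 2 := by
    rw [show y - (x - η • v) = (y - x) + η • v by abel, norm_add_sq_real,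
      real_inner_smul_right, norm_smul, Real.norm_eq_abs, mul_pow, sq_abs]
  have exu : ‖xp - (x - η • v)‖ ^ 2
      = ‖x - xp‖ ^ 2 - 2 * (η * ⟪x - xp, v⟫) + η ^ 2 * ‖v‖ ^ 2 := by
    rw [show xp - (x - η • v) = -(x - xp) + η • v by abel, norm_add_sq_real,
      real_inner_smul_right, norm_smul, Real.norm_eq_abs, mul_pow, sq_abs,
      norm_neg, inner_neg_left]
    ring
  have eC : ‖y - xp‖ ^ 2
      = ‖y - x‖ ^ 2 + 2 * ⟪y - x, x - xp⟫ + ‖x - xp‖ ^ 2 := by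
    rw [show y - xp = (y - x) + (x - xp) by abel, norm_add_sq_real]
  have e3 : ⟪F' x, xp - x⟫ = - ⟪F' x, x - xp⟫ := by
    rw [show xp - x = -(x - xp) by abel, inner_neg_right]
  have e4 : ‖xp - x‖ ^ 2 = ‖x - xp‖ ^ 2 := by rw [norm_sub_rev]
  rw [e3, e4] at key3
  -- goal atoms
  have eh1 : ⟪h, y - x⟫ = 1 / η * ⟪y - x, x - xp⟫ := by
    rw [hh, real_inner_smul_left, real_inner_comm]
  have eh2 : ‖h‖ ^ 2 = (1 / η) ^ 2 * ‖x - xp‖ ^ 2 := by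
    rw [hh, norm_smul, Real.norm_eq_abs, mul_pow, sq_abs]
  have eΔ : ⟪Δ, xp - y⟫ = ⟪F' x, y - x⟫ + ⟪F' x, x - xp⟫
      - ⟪y - x, v⟫ - ⟪x - xp, v⟫ := by
    rw [hΔ, show xp - y = -(y - x) - (x - xp) by abel]
    simp only [inner_sub_left, inner_sub_right, inner_neg_right]
    rw [real_inner_comm y v, real_inner_comm x v, real_inner_comm xp v]
    ring
  -- the η-scaled main inequality
  have hk2 := mul_le_mul_of_nonneg_left key2 hη.le
  have hk3 := mul_le_mul_of_nonneg_left key3 hη.le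
  have hprod : η * L * ‖x - xp‖ ^ 2 ≤ ‖x - xp‖ ^ 2 := by
    have h1 : η * L < 1 := by
      have := (lt_div_iff₀ hL).mp hηL; linarith
    nlinarith [sq_nonneg ‖x - xp‖]
  have hmain : η * (F xp + R xp) + ⟪y - x, x - xp⟫ + 1 / 2 * ‖x - xp‖ ^ 2
      + η * (μF / 2) * ‖y - x‖ ^ 2 + η * (μR / 2) * ‖y - xp‖ ^ 2
      + η * (⟪F' x, y - x⟫ + ⟪F' x, x - xp⟫ - ⟪y - x, v⟫ - ⟪x - xp, v⟫)
      ≤ η * (F y + R y) := by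
    rw [eyu, exu] at key1
    linarith [key1, hk2, hk3, hprod, eC]
  -- conclude
  simp only [hG, ge_iff_le]
  rw [← mul_le_mul_iff_right₀ hη]
  have efinal : η * (F xp + R xp + ⟪h, y - x⟫ + η / 2 * ‖h‖ ^ 2 + μF / 2 * ‖y - x‖ ^ 2
      + μR / 2 * ‖y - xp‖ ^ 2 + ⟪Δ, xp - y⟫)
      = η * (F xp + R xp) + ⟪y - x, x - xp⟫ + 1 / 2 * ‖x - xp‖ ^ 2
      + η * (μF / 2) * ‖y - x‖ ^ 2 + η * (μR / 2) * ‖y - xp‖ ^ 2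
      + η * (⟪F' x, y - x⟫ + ⟪F' x, x - xp⟫ - ⟪y - x, v⟫ - ⟪x - xp, v⟫) := by
    rw [eh1, eh2, eΔ]
    field_simp
  rw [efinal]
  exact hmain
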